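/- Valuations on the subcomplexes of a simplicial complex that take the value 1 on every simplex (every complete subcomplex) equal the Euler characteristic: if X satisfies X(A ∪ B) + X(A ∩ B) = X(A) + X(B) for all subcomplexes A, B, X(∅)=0, and X(x̄)=1 for the complex generated by each simplex x, then X(H) = χ(H) for every subcomplex H. -/

import Mathlib

/-- A finite abstract simplicial complex on a vertex type `α`: a finite set of
nonempty finite sets (simplices) closed under taking nonempty subsets. -/
def IsSimplicialComplex {α : Type} [DecidableEq α] (K : Finset (Finset α)) : Prop :=
  (∀ s ∈ K, s.Nonempty) ∧ ∀ s ∈ K, ∀ t ⊆ s, t.Nonempty → t ∈ K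

/-- The Barycentric refinement of a finite abstract simplicial complex `K`:
the graph whose vertices are the simplices of `K`, two simplices being
adjacent iff one is a proper subset of the other. -/
def barycentric {α : Type} [DecidableEq α] (K : Finset (Finset α)) :
    SimpleGraph {s : Finset α // s ∈ K} where
  Adj x y := x.1 ⊂ y.1 ∨ y.1 ⊂ x.1
  symm := ⟨by intro x y h; tauto⟩
  loopless := ⟨by intro x h; rcases h with h | h <;> exact (lt_irrefl _ h)⟩

lemma euler_simplex {α : Type} [DecidableEq α] (x : Finset α) (hx : x.Nonempty) :
    ∑ y ∈ x.powerset.filter Finset.Nonempty, (-1 : ℝ) ^ (y.card - 1) = 1 := by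
  have hfe : x.powerset.filter Finset.Nonempty = x.powerset.erase ∅ := by
    ext y
    simp [Finset.nonempty_iff_ne_empty, and_comm]
  have h0 : ∑ y ∈ x.powerset, (-1 : ℝ) ^ y.card = 0 := by
    have := Finset.sum_powerset_neg_one_pow_card_of_nonempty (x := x) hx
    have : ((∑ m ∈ x.powerset, (-1 : ℤ) ^ m.card : ℤ) : ℝ) = 0 := by rw [this]; norm_num
    push_cast at this
    convert this using 2
  have hmem : (∅ : Finset α) ∈ x.powerset := Finset.mem_powerset.2 (Finset.empty_subset x)
  have h1 : ∑ y ∈ x.powerset.erase ∅, (-1 : ℝ) ^ y.card = -1 := by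
    have := Finset.add_sum_erase _ (fun y : Finset α => (-1 : ℝ) ^ y.card) hmem
    rw [h0] at this
    simpa using by linarith [this]
  have h2 : ∑ y ∈ x.powerset.erase ∅, (-1 : ℝ) ^ (y.card - 1)
      = -∑ y ∈ x.powerset.erase ∅, (-1 : ℝ) ^ y.card := by
    rw [← Finset.sum_neg_distrib]
    refine Finset.sum_congr rfl fun y hy => ?_
    have hyne : y ≠ ∅ := Finset.ne_of_mem_erase hy
    have hc : 1 ≤ y.card := Finset.card_pos.2 (Finset.nonempty_iff_ne_empty.2 hyne)
    obtain ⟨n, hn⟩ : ∃ n, y.card = n + 1 := ⟨y.card - 1, by omega⟩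
    rw [hn, pow_succ]
    simp
  rw [hfe, h2, h1]; norm_num

/-- A valuation on the subcomplexes of a finite abstract simplicial complex `G`
(a map satisfying `X(A ∪ B) + X(A ∩ B) = X(A) + X(B)` and `X(∅) = 0`) which
takes the value `1` on the complex generated by every simplex of `G` equals the
Euler characteristic `χ(H) = Σ_{y ∈ H} (-1)^{dim y}` on every subcomplex `H`. -/
theorem valuation_eq_eulerChar {α : Type} [DecidableEq α]
    (G : Finset (Finset α)) (hG : IsSimplicialComplex G)
    (X : Finset (Finset α) → ℝ)
    (hval : ∀ A B : Finset (Finset α), A ⊆ G → B ⊆ G →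
      IsSimplicialComplex A → IsSimplicialComplex B →
      X (A ∪ B) + X (A ∩ B) = X A + X B)
    (hempty : X ∅ = 0)
    (hsimplex : ∀ x ∈ G, X (x.powerset.filter Finset.Nonempty) = 1) :
    ∀ H : Finset (Finset α), H ⊆ G → IsSimplicialComplex H →
      X H = ∑ y ∈ H, (-1 : ℝ) ^ (y.card - 1) := by
  intro H
  induction H using Finset.strongInduction with
  | _ H ih =>
  intro hHG hHc
  rcases eq_or_ne H ∅ with rfl | hne
  · simpa using hempty
  · -- pick a simplex of maximal cardinality
    obtain ⟨x, hxH, hxmax⟩ :=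
      Finset.exists_max_image H Finset.card (Finset.nonempty_iff_ne_empty.2 hne)
    set B := x.powerset.filter Finset.Nonempty with hB
    set A := H.erase x with hA
    have hxne : x.Nonempty := hHc.1 x hxH
    have hBH : B ⊆ H := by
      intro y hy
      rw [hB, Finset.mem_filter, Finset.mem_powerset] at hy
      exact hHc.2 x hxH y hy.1 hy.2
    have hAH : A ⊂ H := Finset.erase_ssubset hxH
    have hAG : A ⊆ G := fun y hy => hHG (Finset.mem_of_mem_erase hy)
    have hBG : B ⊆ G := fun y hy => hHG (hBH hy)
    -- A is a complex
    have hAc : IsSimplicialComplex A := by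
      constructor
      · intro s hs; exact hHc.1 s (Finset.mem_of_mem_erase hs)
      · intro s hs t hts htne
        have hsH : s ∈ H := Finset.mem_of_mem_erase hs
        have htH : t ∈ H := hHc.2 s hsH t hts htne
        refine Finset.mem_erase.2 ⟨?_, htH⟩
        rintro rfl
        have : t ⊂ s := ssubset_of_subset_of_ne hts (Finset.ne_of_mem_erase hs).symm
        exact absurd (hxmax s hsH) (not_le.2 (Finset.card_lt_card this))
    -- B is a complex
    have hBc : IsSimplicialComplex B := by
      constructor
      · intro s hs; exact (Finset.mem_filter.1 hs).2
      · intro s hs t hts htne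
        rw [hB, Finset.mem_filter, Finset.mem_powerset] at hs ⊢
        exact ⟨hts.trans hs.1, htne⟩
    have hunion : A ∪ B = H := by
      apply Finset.Subset.antisymm
      · exact Finset.union_subset (fun y hy => Finset.mem_of_mem_erase hy) hBH
      · intro y hy
        rcases eq_or_ne y x with rfl | hyx
        · exact Finset.mem_union_right _ (Finset.mem_filter.2
            ⟨Finset.mem_powerset.2 (subset_refl y), hxne⟩)
        · exact Finset.mem_union_left _ (Finset.mem_erase.2 ⟨hyx, hy⟩)
    have hinter : A ∩ B = B.erase x := by
      ext y
      simp only [hA, Finset.mem_inter, Finset.mem_erase]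
      constructor
      · rintro ⟨⟨h1, _⟩, h2⟩; exact ⟨h1, h2⟩
      · rintro ⟨h1, h2⟩; exact ⟨⟨h1, hBH h2⟩, h2⟩
    have hBeA : B.erase x ⊆ A := by
      intro y hy
      rw [Finset.mem_erase] at hy
      exact Finset.mem_erase.2 ⟨hy.1, hBH hy.2⟩
    have hBec : IsSimplicialComplex (B.erase x) := by
      constructor
      · intro s hs; exact hBc.1 s (Finset.mem_of_mem_erase hs)
      · intro s hs t hts htne
        have hsB : s ∈ B := Finset.mem_of_mem_erase hs
        have htB : t ∈ B := hBc.2 s hsB t hts htne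
        refine Finset.mem_erase.2 ⟨?_, htB⟩
        rintro rfl
        have hsx : s ⊆ t := (Finset.mem_powerset.1 (Finset.mem_filter.1 hsB).1)
        have : s = t := Finset.Subset.antisymm hsx hts
        exact (Finset.ne_of_mem_erase hs) this
    have hBeG : B.erase x ⊆ G := fun y hy => hBG (Finset.mem_of_mem_erase hy)
    have hXA : X A = ∑ y ∈ A, (-1 : ℝ) ^ (y.card - 1) := ih A hAH hAG hAc
    have hXBe : X (B.erase x) = ∑ y ∈ B.erase x, (-1 : ℝ) ^ (y.card - 1) :=
      ih (B.erase x) (lt_of_le_of_lt hBeA hAH) hBeG hBec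
    have hXB : X B = 1 := hsimplex x (hHG hxH)
    have hv := hval A B hAG hBG hAc hBc
    rw [hunion, hinter, hXA, hXBe, hXB] at hv
    -- Euler characteristic identities
    have hxB : x ∈ B := Finset.mem_filter.2 ⟨Finset.mem_powerset.2 (subset_refl x), hxne⟩
    have hsumH : ∑ y ∈ H, (-1 : ℝ) ^ (y.card - 1)
        = (-1 : ℝ) ^ (x.card - 1) + ∑ y ∈ A, (-1 : ℝ) ^ (y.card - 1) :=
      (Finset.add_sum_erase _ _ hxH).symm
    have hsumB : (-1 : ℝ) ^ (x.card - 1) + ∑ y ∈ B.erase x, (-1 : ℝ) ^ (y.card - 1) = 1 := by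
      exact (Finset.add_sum_erase B (fun y => (-1 : ℝ) ^ (y.card - 1)) hxB).trans
        (euler_simplex x hxne)
    rw [hsumH]
    linarith [hv, hsumB]
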